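/- If f_1,...,f_n : X → Y are maps with Y path-connected, then D(f_1,...,f_n) ≤ TC_n(Y). -/

import Mathlib

open Set

/-- The `n`-th homotopic distance of maps `f 0, …, f (n-1) : X → Y`:
the least `k` admitting an open cover `U 0, …, U k` of `X` on each element of
which all the maps are pairwise homotopic; `∞` if no such cover exists. -/
noncomputable def homDist {X Y : Type*} [TopologicalSpace X] [TopologicalSpace Y]
    {n : ℕ} (f : Fin n → C(X, Y)) : ℕ∞ :=
  sInf ((fun k : ℕ => (k : ℕ∞)) '' {k | ∃ U : Fin (k + 1) → Set X,
    (∀ j, IsOpen (U j)) ∧ (⋃ j, U j) = Set.univ ∧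
    ∀ j i i', ((f i).restrict (U j)).Homotopic ((f i').restrict (U j))})

/-- The sectional category of a map `q : E → B`: the least `k` such that `B`
has an open cover of `k+1` open sets each admitting a continuous local section. -/
noncomputable def secat {E B : Type*} [TopologicalSpace E] [TopologicalSpace B]
    (q : C(E, B)) : ℕ∞ :=
  sInf ((fun k : ℕ => (k : ℕ∞)) '' {k | ∃ U : Fin (k + 1) → Set B,
    (∀ j, IsOpen (U j)) ∧ (⋃ j, U j) = Set.univ ∧
    ∀ j, ∃ s : C(U j, E), ∀ x : U j, q (s x) = (x : B)})

/-- The space `X^{J_n}` of `n`-legged paths in `X`: `n` paths with a common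
initial point (the wedge of `n` intervals glued at `0`, mapped into `X`). -/
abbrev NLegged (X : Type*) [TopologicalSpace X] (n : ℕ) : Type _ :=
  {γ : Fin n → C(unitInterval, X) // ∀ i j : Fin n, γ i 0 = γ j 0}

/-- The fibration `e_n : X^{J_n} → X^n` evaluating at the `n` free endpoints. -/
def enMap (X : Type*) [TopologicalSpace X] (n : ℕ) :
    C(NLegged X n, Fin n → X) :=
  ⟨fun γ i => (γ.1 i) 1, by
    apply continuous_pi; intro i
    exact (continuous_eval_const (1 : unitInterval)).comp
      ((continuous_apply i).comp continuous_subtype_val)⟩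


/-- For maps `f₁, …, fₙ : X → Y` with `Y` path-connected,
`D(f₁, …, fₙ) ≤ TCₙ(Y) = secat(e_n)`. -/
theorem homDist_le_TC {X Y : Type*} [TopologicalSpace X] [TopologicalSpace Y]
    [PathConnectedSpace Y] {n : ℕ} (f : Fin n → C(X, Y)) :
    homDist f ≤ secat (enMap Y n) := by
  apply sInf_le_sInf
  apply Set.image_mono
  rintro k ⟨U, hUopen, hUcov, hsec⟩
  -- the map F : X → Y^n, x ↦ (fun i => f i x)
  have hFcont : Continuous fun (x : X) (i : Fin n) => f i x :=
    continuous_pi fun i => (f i).continuous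
  set F : X → (Fin n → Y) := fun x i => f i x with hF
  refine ⟨fun j => F ⁻¹' U j, fun j => (hUopen j).preimage hFcont, ?_, ?_⟩
  · rw [← Set.preimage_iUnion, hUcov, Set.preimage_univ]
  · intro j i i'
    obtain ⟨s, hs⟩ := hsec j
    set V : Set X := F ⁻¹' U j with hV
    -- the map Φ : V → NLegged Y n
    have hincl : Continuous fun (x : V) => (⟨F x.1, x.2⟩ : U j) :=
      Continuous.subtype_mk (hFcont.comp continuous_subtype_val) _
    set Φ : V → NLegged Y n := fun x => s ⟨F x.1, x.2⟩ with hΦ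
    have hΦcont : Continuous Φ := s.continuous.comp hincl
    -- the "base point" map c
    have hend : ∀ (x : V) (i : Fin n), (Φ x).1 i 1 = f i x.1 := by
      intro x i
      have := hs ⟨F x.1, x.2⟩
      have := congrFun this i
      exact this
    -- homotopy from c to f i along leg i
    have key : ∀ i₀ : Fin n,
        ∀ c : C(V, Y), (∀ x : V, c x = (Φ x).1 i₀ 0) →
        ((f i₀).restrict V).Homotopic c := by
      intro i₀ c hc
      refine ⟨⟨⟨fun p => (Φ p.2).1 i₀ (unitInterval.symm p.1), ?_⟩, ?_, ?_⟩⟩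
      · exact continuous_eval.comp
          (((continuous_apply i₀).comp
            (continuous_subtype_val.comp (hΦcont.comp continuous_snd))).prodMk
           (unitInterval.continuous_symm.comp continuous_fst))
      · intro x
        simp [unitInterval.symm, hend x i₀]
      · intro x
        simp [unitInterval.symm, hc x]
    have hc : ∀ x : V, (Φ x).1 i 0 = (Φ x).1 i' 0 := fun x => (Φ x).2 i i'
    have ccont : Continuous fun x : V => (Φ x).1 i 0 :=
      (continuous_eval_const 0).comp
        ((continuous_apply i).comp (continuous_subtype_val.comp hΦcont))
    set c : C(V, Y) := ⟨fun x => (Φ x).1 i 0, ccont⟩ with hcdef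
    have h1 : ((f i).restrict V).Homotopic c := key i c (fun _ => rfl)
    have h2 : ((f i').restrict V).Homotopic c := key i' c (fun x => hc x)
    exact h1.trans h2.symm
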